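/- Let A be an infinite set of propositional atoms, F_c the set of classical propositional formulas over A (built from atoms, the constants false and true, and the connectives ¬, ∨, ∧), 𝒱 the set of classical two-valued valuations on A (with classical satisfaction ⊨). For every subset W ⊆ 𝒱 with |W| ≤ |A|, Th(𝒱) = Th(𝒱 \ W). -/

import Mathlib

/-- Classical propositional formulas over a set `A` of atoms, with constants
`false`, `true` and connectives `¬`, `∨`, `∧`. -/
inductive PropForm (A : Type u) : Type u
  | atom : A → PropForm A
  | fls : PropForm A
  | tru : PropForm A
  | neg : PropForm A → PropForm A
  | disj : PropForm A → PropForm A → PropForm A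
  | conj : PropForm A → PropForm A → PropForm A

/-- Classical two-valued evaluation of a formula under a valuation `v : A → Bool`. -/
def PropForm.eval {A : Type u} (v : A → Bool) : PropForm A → Bool
  | atom a => v a
  | fls => false
  | tru => true
  | neg φ => !(φ.eval v)
  | disj φ ψ => φ.eval v || ψ.eval v
  | conj φ ψ => φ.eval v && ψ.eval v

/-- Classical satisfaction: `v ⊨ α` iff `α` evaluates to `true` under `v`. -/
def satC {A : Type u} (v : A → Bool) (α : PropForm A) : Prop :=
  α.eval v = true

/-- The set of models of a set of formulas `Γ`. -/
def modSet {F V : Type*} (sat : V → F → Prop) (Γ : Set F) : Set V :=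
  {v | ∀ α ∈ Γ, sat v α}

/-- The set of formulas satisfied in every valuation of `S`. -/
def thSet {F V : Type*} (sat : V → F → Prop) (S : Set V) : Set F :=
  {α | S ⊆ modSet sat {α}}

/-- The list of atoms occurring in a formula. -/
def PropForm.atomList {A : Type u} : PropForm A → List A
  | atom a => [a]
  | fls => []
  | tru => []
  | neg φ => φ.atomList
  | disj φ ψ => φ.atomList ++ ψ.atomList
  | conj φ ψ => φ.atomList ++ ψ.atomList

theorem PropForm.eval_congr {A : Type u} (φ : PropForm A) (v v' : A → Bool)
    (h : ∀ a ∈ φ.atomList, v a = v' a) : φ.eval v = φ.eval v' := by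
  induction φ with
  | atom a => exact h a (by simp [atomList])
  | fls => rfl
  | tru => rfl
  | neg φ ih => simp [eval, ih h]
  | disj φ ψ ih1 ih2 =>
      simp only [eval]
      rw [ih1 fun a ha => h a (by simp [atomList, ha]),
        ih2 fun a ha => h a (by simp [atomList, ha])]
  | conj φ ψ ih1 ih2 =>
      simp only [eval]
      rw [ih1 fun a ha => h a (by simp [atomList, ha]),
        ih2 fun a ha => h a (by simp [atomList, ha])]

theorem stmt16 (A : Type u) [Infinite A] (W : Set (A → Bool))
    (hW : Cardinal.mk W ≤ Cardinal.mk A) :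
    thSet (satC (A := A)) Set.univ = thSet (satC (A := A)) (Set.univ \ W) := by
  classical
  apply Set.Subset.antisymm
  · intro α hα v hv
    exact hα (Set.mem_univ v)
  · intro α hα v _
    -- it suffices to find v' ∉ W agreeing with v on atoms of α
    set s : Set A := {a | a ∈ α.atomList} with hs
    set T : Set (A → Bool) := {v' | (∀ a ∈ α.atomList, v' a = v a)} with hT
    have hscard : Cardinal.mk s < Cardinal.mk A := by
      calc Cardinal.mk s < Cardinal.aleph0 := (α.atomList.finite_toSet).lt_aleph0
        _ ≤ Cardinal.mk A := Cardinal.aleph0_le_mk A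
    have hcompl : Cardinal.mk (↥sᶜ) = Cardinal.mk A :=
      Cardinal.mk_compl_of_infinite s hscard
    -- injection from (sᶜ → Bool) into T
    let f : (↥sᶜ → Bool) → (A → Bool) := fun g a =>
      if h : a ∈ s then v a else g ⟨a, h⟩
    have hfT : ∀ g, f g ∈ T := by
      intro g a ha
      simp only [f]
      rw [dif_pos (show a ∈ s from ha)]
    have hfinj : Function.Injective f := by
      intro g g' h
      funext x
      have := congrFun h x.1
      simpa only [f, dif_neg x.2] using this
    have hTcard : Cardinal.mk A < Cardinal.mk T := by
      have h1 : Cardinal.mk (↥sᶜ → Bool) ≤ Cardinal.mk T := by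
        exact (Cardinal.mk_range_eq f hfinj).symm.trans_le (Cardinal.mk_le_mk_of_subset (Set.range_subset_iff.mpr hfT))
      have h2 : Cardinal.mk (↥sᶜ → Bool) = 2 ^ Cardinal.mk A := by
        rw [Cardinal.mk_arrow, Cardinal.mk_bool, hcompl]
        simp [Cardinal.lift_id]
      calc Cardinal.mk A < 2 ^ Cardinal.mk A := Cardinal.cantor _
        _ = Cardinal.mk (↥sᶜ → Bool) := h2.symm
        _ ≤ Cardinal.mk T := h1
    have hnsub : ¬ T ⊆ W := by
      intro hsub
      exact absurd (Cardinal.mk_le_mk_of_subset hsub) (by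
        intro h
        exact (lt_irrefl _ ((hTcard.trans_le (h.trans hW)))))
    obtain ⟨v', hv'T, hv'W⟩ := Set.not_subset.mp hnsub
    have hsat : satC v' α := hα ⟨Set.mem_univ v', hv'W⟩ α rfl
    have : α.eval v = α.eval v' := PropForm.eval_congr α v v' fun a ha => (hv'T a ha).symm
    intro β hβ
    cases hβ
    unfold satC at *
    rw [this]
    exact hsat
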